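/- For the TFG, the adjoint of an exponential satisfies Ad_{exp_TFG(ξ)} equal to the block matrix with diagonal blocks R = exp((ξ^R)×) and first block column (R; (ν(ξ^R)ξ^v)× R; (ν(ξ^R)ξ^p)× R; (ν(ξ^R)ξ^b)× R), where ν is the left Jacobian of SO(3). -/

import Mathlib

open Matrix

noncomputable section

abbrev V3 := Fin 3 → ℝ
abbrev M3 := Matrix (Fin 3) (Fin 3) ℝ

/-- The skew-symmetric cross-product matrix `(ξ)×`. -/
def skew (ξ : V3) : M3 :=
  !![0, -ξ 2, ξ 1; ξ 2, 0, -ξ 0; -ξ 1, ξ 0, 0]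

/-- The Euclidean norm of a vector of `ℝ³`. -/
def nrm (ξ : V3) : ℝ := Real.sqrt (ξ 0 ^ 2 + ξ 1 ^ 2 + ξ 2 ^ 2)

/-- The left Jacobian of SO(3):
`ν(ξ) = I + ((1−cos‖ξ‖)/‖ξ‖²)(ξ)× + ((‖ξ‖−sin‖ξ‖)/‖ξ‖³)(ξ)ײ`. -/
def nu (ξ : V3) : M3 :=
  1 + ((1 - Real.cos (nrm ξ)) / nrm ξ ^ 2) • skew ξ
    + ((nrm ξ - Real.sin (nrm ξ)) / nrm ξ ^ 3) • (skew ξ * skew ξ)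

/-- `R` is a rotation matrix: orthogonal with determinant one. -/
def IsSO3 (R : M3) : Prop := R * Rᵀ = 1 ∧ R.det = 1

/-- An element of the Two-Frames Group: `(R, v, p, b)`. -/
abbrev TFGel := M3 × V3 × V3 × V3

/-- The TFG composition law. -/
def tmul (x y : TFGel) : TFGel :=
  (x.1 * y.1, x.2.1 + x.1 *ᵥ y.2.1, x.2.2.1 + x.1 *ᵥ y.2.2.1,
    y.2.2.2 + y.1ᵀ *ᵥ x.2.2.2)

/-- The adjoint of `(R,v,p,b)`, as the action on `ℝ¹² = ℝ³ × ℝ³ × ℝ³ × ℝ³` of the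
block matrix with diagonal blocks `R` and first block column
`(R; (v)× R; (p)× R; R (b)×)`, all other blocks zero. -/
def adAct (x : TFGel) (ξ : V3 × V3 × V3 × V3) : V3 × V3 × V3 × V3 :=
  (x.1 *ᵥ ξ.1,
    skew x.2.1 *ᵥ (x.1 *ᵥ ξ.1) + x.1 *ᵥ ξ.2.1,
    skew x.2.2.1 *ᵥ (x.1 *ᵥ ξ.1) + x.1 *ᵥ ξ.2.2.1,
    x.1 *ᵥ (skew x.2.2.2 *ᵥ ξ.1) + x.1 *ᵥ ξ.2.2.2)

/-- The candidate TFG exponential: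
`exp_TFG(ξ^R, ξ^v, ξ^p, ξ^b) = (exp((ξ^R)×), ν(ξ^R)ξ^v, ν(ξ^R)ξ^p, ν(−ξ^R)ξ^b)`. -/
def expTFG (ξ : V3 × V3 × V3 × V3) : TFGel :=
  (NormedSpace.exp (skew ξ.1), nu ξ.1 *ᵥ ξ.2.1, nu ξ.1 *ᵥ ξ.2.2.1,
    nu (-ξ.1) *ᵥ ξ.2.2.2)

lemma nrm_nonneg (a : V3) : 0 ≤ nrm a := Real.sqrt_nonneg _

lemma nrm_sq (a : V3) : nrm a ^ 2 = a 0 ^ 2 + a 1 ^ 2 + a 2 ^ 2 :=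
  Real.sq_sqrt (by positivity)

lemma nrm_neg (a : V3) : nrm (-a) = nrm a := by
  simp [nrm]

lemma skew_neg (a : V3) : skew (-a) = -skew a := by
  ext i j
  fin_cases i <;> fin_cases j <;> simp [skew]

lemma skew_eq_zero (a : V3) (h : nrm a = 0) : skew a = 0 := by
  have h2 : a 0 ^ 2 + a 1 ^ 2 + a 2 ^ 2 = 0 := by
    rw [← nrm_sq, h]; ring
  have h0 : a 0 = 0 := by nlinarith
  have h1 : a 1 = 0 := by nlinarith
  have h3 : a 2 = 0 := by nlinarith
  ext i j
  fin_cases i <;> fin_cases j <;> simp [skew, h0, h1, h3, Matrix.zero_apply, Matrix.vecHead, Matrix.vecTail]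

lemma skew_cube (a : V3) : skew a * (skew a * skew a) = (-(nrm a ^ 2)) • skew a := by
  rw [nrm_sq]
  ext i j
  fin_cases i <;> fin_cases j <;>
    simp [skew, Matrix.mul_apply, Fin.sum_univ_three, Matrix.smul_apply] <;> ring

lemma skew_pow_odd (a : V3) (n : ℕ) :
    skew a ^ (2 * n + 1) = ((-(nrm a ^ 2)) ^ n) • skew a := by
  induction n with
  | zero => simp
  | succ n ih =>
    have : 2 * (n + 1) + 1 = (2 * n + 1) + 2 := by ring
    rw [this, pow_add, ih, smul_mul_assoc, pow_two (skew a), skew_cube, smul_smul,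
      ← pow_succ]

lemma skew_pow_even (a : V3) (n : ℕ) :
    skew a ^ (2 * n + 2) = ((-(nrm a ^ 2)) ^ n) • (skew a * skew a) := by
  rw [pow_succ, skew_pow_odd, smul_mul_assoc]

set_option maxHeartbeats 1000000 in
open NormedSpace in
lemma exp_skew (a : V3) :
    NormedSpace.exp (skew a) = 1 + (Real.sin (nrm a) / nrm a) • skew a
      + ((1 - Real.cos (nrm a)) / nrm a ^ 2) • (skew a * skew a) := by
  rcases eq_or_ne (nrm a) 0 with h0 | h0
  · rw [skew_eq_zero a h0, h0]
    simp [exp_zero]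
  · set θ := nrm a with hθdef
    have hθ : 0 < θ := lt_of_le_of_ne (nrm_nonneg a) (Ne.symm h0)
    rw [exp_eq_tsum (𝕂 := ℝ)]
    refine (HasSum.tsum_eq ?_).symm.symm
    have hodd : HasSum (fun n : ℕ => (((2 * n + 1).factorial : ℝ))⁻¹ • skew a ^ (2 * n + 1))
        ((Real.sin θ / θ) • skew a) := by
      have h := ((Real.hasSum_sin θ).div_const θ).smul_const (skew a)
      convert h using 2 with n
      rw [skew_pow_odd, smul_smul]
      congr 1
      rw [show (-(θ ^ 2)) ^ n = (-1 : ℝ) ^ n * θ ^ (2 * n) by rw [neg_pow, ← pow_mul]]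
      field_simp
      try ring
    have hc1 : HasSum (fun n : ℕ =>
          (-1 : ℝ) ^ (n + 1) * θ ^ (2 * (n + 1)) / ((2 * (n + 1)).factorial : ℝ))
        (Real.cos θ - 1) :=
      (hasSum_nat_add_iff
        (f := fun n : ℕ => (-1 : ℝ) ^ n * θ ^ (2 * n) / ((2 * n).factorial : ℝ)) 1).mpr
        (by simpa using Real.hasSum_cos θ)
    have hc2 : HasSum (fun n : ℕ => ((-1 : ℝ) ^ n * θ ^ (2 * n) / ((2 * (n + 1)).factorial : ℝ)))
        ((1 - Real.cos θ) / θ ^ 2) := by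
      have h := (hc1.neg.div_const (θ ^ 2))
      convert h using 2 with n
      · rfl
      · have h4 : ((2 * (n + 1)).factorial : ℝ) ≠ 0 := by positivity
        field_simp
        try ring
      · ring
    have heven2 : HasSum
        (fun n : ℕ => (((2 * (n + 1)).factorial : ℝ))⁻¹ • skew a ^ (2 * (n + 1)))
        (((1 - Real.cos θ) / θ ^ 2) • (skew a * skew a)) := by
      have h := hc2.smul_const (skew a * skew a)
      convert h using 2 with n
      rw [show 2 * (n + 1) = 2 * n + 2 from by ring, skew_pow_even, smul_smul]
      congr 1
      rw [show (-(θ ^ 2)) ^ n = (-1 : ℝ) ^ n * θ ^ (2 * n) by rw [neg_pow, ← pow_mul]]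
      rw [show 2 * n + 2 = 2 * (n + 1) from by ring]
      field_simp
      try ring
    have heven : HasSum (fun n : ℕ => (((2 * n).factorial : ℝ))⁻¹ • skew a ^ (2 * n))
        (1 + ((1 - Real.cos θ) / θ ^ 2) • (skew a * skew a)) := by
      have h := (hasSum_nat_add_iff
        (f := fun n : ℕ => (((2 * n).factorial : ℝ))⁻¹ • skew a ^ (2 * n)) 1
        (g := ((1 - Real.cos θ) / θ ^ 2) • (skew a * skew a))).mp (by exact heven2)
      rw [Finset.range_one, Finset.sum_singleton] at h
      norm_num at h
      rw [add_comm] at h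
      exact h
    have htot := HasSum.even_add_odd
      (f := fun n : ℕ => ((n.factorial : ℝ))⁻¹ • skew a ^ n) heven hodd
    convert htot using 1
    · rfl
    · abel

lemma nu_eq (a : V3) : nu a = 1 + ((1 - Real.cos (nrm a)) / nrm a ^ 2) • skew a
    + ((nrm a - Real.sin (nrm a)) / nrm a ^ 3) • (skew a * skew a) := rfl

lemma nu_neg_eq (a : V3) : nu (-a) = 1 - ((1 - Real.cos (nrm a)) / nrm a ^ 2) • skew a
    + ((nrm a - Real.sin (nrm a)) / nrm a ^ 3) • (skew a * skew a) := by
  rw [nu_eq, nrm_neg, skew_neg, neg_mul_neg, smul_neg]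
  module

set_option maxHeartbeats 1000000 in
lemma exp_mul_nu_neg (a : V3) :
    NormedSpace.exp (skew a) * nu (-a) = nu a := by
  rcases eq_or_ne (nrm a) 0 with h0 | h0
  · have hz := skew_eq_zero a h0
    rw [nu_neg_eq, nu_eq, exp_skew, hz]
    simp
  · set θ := nrm a with hθdef
    have hθ : 0 < θ := lt_of_le_of_ne (nrm_nonneg a) (Ne.symm h0)
    set S := skew a with hS
    have hA : S * (S * S) = (-(θ ^ 2)) • S := skew_cube a
    have hB : (S * S) * S = (-(θ ^ 2)) • S := by rw [mul_assoc]; exact hA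
    have hC : (S * S) * (S * S) = (-(θ ^ 2)) • (S * S) := by
      rw [← mul_assoc, hB, smul_mul_assoc]
    rw [nu_neg_eq, nu_eq, exp_skew, ← hS]
    simp only [mul_add, add_mul, sub_mul, mul_sub, one_mul, mul_one,
      smul_mul_assoc, mul_smul_comm, smul_smul, hA, hB, hC]
    have pyth := Real.sin_sq_add_cos_sq θ
    simp only [← hθdef]
    match_scalars
    · ring
    · field_simp
      linear_combination pyth
    · field_simp
      ring

lemma transpose_mul_skew_mulVec (M : M3) (x : V3) :
    Mᵀ * skew (M *ᵥ x) * M = M.det • skew x := by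
  ext i j
  fin_cases i <;> fin_cases j <;>
    simp [skew, Matrix.mul_apply, Matrix.mulVec, Fin.sum_univ_three, Matrix.det_fin_three,
      Matrix.smul_apply, dotProduct, Matrix.transpose_apply] <;> ring

lemma skew_transpose (a : V3) : (skew a)ᵀ = -skew a := by
  ext i j
  fin_cases i <;> fin_cases j <;> simp [skew]

open NormedSpace in
lemma exp_skew_mul_transpose (a : V3) :
    NormedSpace.exp (skew a) * (NormedSpace.exp (skew a))ᵀ = 1 := by
  rw [← Matrix.exp_transpose, skew_transpose,
    ← Matrix.exp_add_of_commute _ _ ((Commute.refl (skew a)).neg_right)]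
  simp [exp_zero]

open NormedSpace in
lemma exp_skew_det (a : V3) : (NormedSpace.exp (skew a)).det = 1 := by
  have hsq : (NormedSpace.exp (skew a)).det * (NormedSpace.exp (skew a)).det = 1 := by
    have h := congrArg Matrix.det (exp_skew_mul_transpose a)
    rwa [Matrix.det_mul, Matrix.det_transpose, Matrix.det_one] at h
  have hpos : 0 ≤ (NormedSpace.exp (skew a)).det := by
    have h2 : NormedSpace.exp (skew a)
        = NormedSpace.exp ((2 : ℝ)⁻¹ • skew a) * NormedSpace.exp ((2 : ℝ)⁻¹ • skew a) := by
      rw [← Matrix.exp_add_of_commute _ _ (Commute.refl _)]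
      congr 1
      match_scalars
      norm_num
    rw [h2, Matrix.det_mul]
    exact mul_self_nonneg _
  nlinarith

open NormedSpace in
lemma exp_skew_equivariant (a : V3) (y : V3) :
    skew (NormedSpace.exp (skew a) *ᵥ y) * NormedSpace.exp (skew a)
      = NormedSpace.exp (skew a) * skew y := by
  set R := NormedSpace.exp (skew a) with hR
  have hP := transpose_mul_skew_mulVec R y
  rw [exp_skew_det, one_smul] at hP
  calc skew (R *ᵥ y) * R = (R * Rᵀ) * (skew (R *ᵥ y) * R) := by
        rw [exp_skew_mul_transpose, one_mul]
    _ = R * (Rᵀ * skew (R *ᵥ y) * R) := by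
        rw [mul_assoc, mul_assoc]
    _ = R * skew y := by rw [hP]

/-- The adjoint of a TFG exponential: `Ad_{exp_TFG(ξ)}` is the block matrix with
diagonal blocks `R = exp((ξ^R)×)` and first block column
`(R; (ν(ξ^R)ξ^v)× R; (ν(ξ^R)ξ^p)× R; (ν(ξ^R)ξ^b)× R)`. -/
theorem adAct_expTFG (ξ : V3 × V3 × V3 × V3) :
    adAct (expTFG ξ) = fun ζ : V3 × V3 × V3 × V3 =>
      (NormedSpace.exp (skew ξ.1) *ᵥ ζ.1,
        skew (nu ξ.1 *ᵥ ξ.2.1) *ᵥ (NormedSpace.exp (skew ξ.1) *ᵥ ζ.1) +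
          NormedSpace.exp (skew ξ.1) *ᵥ ζ.2.1,
        skew (nu ξ.1 *ᵥ ξ.2.2.1) *ᵥ (NormedSpace.exp (skew ξ.1) *ᵥ ζ.1) +
          NormedSpace.exp (skew ξ.1) *ᵥ ζ.2.2.1,
        skew (nu ξ.1 *ᵥ ξ.2.2.2) *ᵥ (NormedSpace.exp (skew ξ.1) *ᵥ ζ.1) +
          NormedSpace.exp (skew ξ.1) *ᵥ ζ.2.2.2) := by
  funext ζ
  set R := NormedSpace.exp (skew ξ.1) with hR
  refine Prod.ext rfl (Prod.ext rfl (Prod.ext rfl ?_))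
  show R *ᵥ (skew (nu (-ξ.1) *ᵥ ξ.2.2.2) *ᵥ ζ.1) + R *ᵥ ζ.2.2.2
      = skew (nu ξ.1 *ᵥ ξ.2.2.2) *ᵥ (R *ᵥ ζ.1) + R *ᵥ ζ.2.2.2
  congr 1
  have hnu : nu ξ.1 *ᵥ ξ.2.2.2 = R *ᵥ (nu (-ξ.1) *ᵥ ξ.2.2.2) := by
    rw [Matrix.mulVec_mulVec, ← exp_mul_nu_neg]
  rw [hnu, Matrix.mulVec_mulVec, Matrix.mulVec_mulVec, exp_skew_equivariant]
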